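/- Let α ∈ (0,1), σ ∈ (1/2, 1], τ > 0, and let i ≥ 1 be an integer. Define c_i(α,σ) := ((i+σ+1)^{2−α} − 2(i+σ)^{2−α} + (i+σ−1)^{2−α})/(2−α) − ((i+σ+1)^{1−α} − 2(i+σ)^{1−α} + (i+σ−1)^{1−α})/2 and a_i(α,σ;τ) := c_i(α,σ)·τ^{−α}/Γ(2−α). Then a_i(α,σ;τ) = ((1−α)/Γ(2−α)) · ∫_{−1}^{1} (1−|y|)·( ((i+σ+y)τ)^{−α} + (ατ/2)·((i+σ+y)τ)^{−1−α} ) dy. -/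

import Mathlib

open intervalIntegral Real

lemma deriv_pow_shift (s β y : ℝ) (h : s + y ≠ 0) :
    HasDerivAt (fun y : ℝ => (s + y) ^ β) (β * (s + y) ^ (β - 1)) y := by
  have h0 : HasDerivAt (fun y : ℝ => s + y) 1 y := (hasDerivAt_id y).const_add s
  have := (Real.hasDerivAt_rpow_const (p := β) (Or.inl h)).comp y h0
  simpa [Function.comp_def] using this

lemma integ (s β : ℝ) (hs : 1 < s) (h1 : β + 1 ≠ 0) (h2 : β + 2 ≠ 0) :
    ∫ y in (-1:ℝ)..1, (1 - |y|) * (s + y) ^ β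
      = ((s+1)^(β+2) - 2*s^(β+2) + (s-1)^(β+2)) / ((β+1)*(β+2)) := by
  have hpos : ∀ y : ℝ, y ∈ Set.uIcc (-1:ℝ) 1 → 0 < s + y := by
    intro y hy
    rw [Set.uIcc_of_le (by norm_num)] at hy
    nlinarith [hy.1]
  have hcont : ContinuousOn (fun y : ℝ => (1 - |y|) * (s + y) ^ β) (Set.uIcc (-1:ℝ) 1) := by
    apply ContinuousOn.mul
    · exact (continuous_const.sub continuous_abs).continuousOn
    · exact (ContinuousOn.rpow_const (by fun_prop) (fun y hy => Or.inl (hpos y hy).ne'))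
  have hsub1 : Set.uIcc (-1:ℝ) 0 ⊆ Set.uIcc (-1:ℝ) 1 := by
    rw [Set.uIcc_of_le (by norm_num), Set.uIcc_of_le (by norm_num)]
    exact Set.Icc_subset_Icc le_rfl (by norm_num)
  have hsub2 : Set.uIcc (0:ℝ) 1 ⊆ Set.uIcc (-1:ℝ) 1 := by
    rw [Set.uIcc_of_le (by norm_num), Set.uIcc_of_le (by norm_num)]
    exact Set.Icc_subset_Icc (by norm_num) le_rfl
  have hint1 : IntervalIntegrable (fun y : ℝ => (1 - |y|) * (s + y) ^ β) MeasureTheory.volume (-1) 0 :=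
    (hcont.mono hsub1).intervalIntegrable
  have hint2 : IntervalIntegrable (fun y : ℝ => (1 - |y|) * (s + y) ^ β) MeasureTheory.volume 0 1 :=
    (hcont.mono hsub2).intervalIntegrable
  rw [← intervalIntegral.integral_add_adjacent_intervals hint1 hint2]
  have e1 : (∫ y in (-1:ℝ)..0, (1 - |y|) * (s + y) ^ β)
      = ∫ y in (-1:ℝ)..0, (1 + y) * (s + y) ^ β := by
    apply intervalIntegral.integral_congr
    intro y hy
    rw [Set.uIcc_of_le (by norm_num)] at hy
    simp only [abs_of_nonpos hy.2]
    ring_nf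
  have e2 : (∫ y in (0:ℝ)..1, (1 - |y|) * (s + y) ^ β)
      = ∫ y in (0:ℝ)..1, (1 - y) * (s + y) ^ β := by
    apply intervalIntegral.integral_congr
    intro y hy
    rw [Set.uIcc_of_le (by norm_num)] at hy
    simp only [abs_of_nonneg hy.1]
  rw [e1, e2]
  have I1 : (∫ y in (-1:ℝ)..0, (1 + y) * (s + y) ^ β)
      = (s^(β+1)/(β+1) - s^(β+2)/((β+1)*(β+2))) - (0 - (s-1)^(β+2)/((β+1)*(β+2))) := by
    have key := intervalIntegral.integral_eq_sub_of_hasDerivAt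
      (f := fun y : ℝ => (1+y)*(s+y)^(β+1)/(β+1) - (s+y)^(β+2)/((β+1)*(β+2)))
      (f' := fun y : ℝ => (1 + y) * (s + y) ^ β) (a := -1) (b := 0)
      ?_ ?_
    · rw [key]
      have : s + -1 = s - 1 := by ring
      rw [this]; norm_num
    · intro y hy
      have hy' : 0 < s + y := hpos y (hsub1 hy)
      have da : HasDerivAt (fun y : ℝ => 1 + y) 1 y := (hasDerivAt_id y).const_add 1
      have db := deriv_pow_shift s (β+1) y hy'.ne'
      have dc := deriv_pow_shift s (β+2) y hy'.ne'
      have D := ((da.mul db).div_const (β+1)).sub (dc.div_const ((β+1)*(β+2)))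
      convert D using 1
      · rfl
      have eb : β + 1 - 1 = β := by ring
      have ec : β + 2 - 1 = β + 1 := by ring
      rw [eb, ec]
      field_simp
      ring
    · exact (ContinuousOn.mul (by fun_prop)
        (ContinuousOn.rpow_const (by fun_prop)
          (fun y hy => Or.inl (hpos y (hsub1 hy)).ne'))).intervalIntegrable
  have I2 : (∫ y in (0:ℝ)..1, (1 - y) * (s + y) ^ β)
      = (0 + (s+1)^(β+2)/((β+1)*(β+2))) - (s^(β+1)/(β+1) + s^(β+2)/((β+1)*(β+2))) := by
    have key := intervalIntegral.integral_eq_sub_of_hasDerivAt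
      (f := fun y : ℝ => (1-y)*(s+y)^(β+1)/(β+1) + (s+y)^(β+2)/((β+1)*(β+2)))
      (f' := fun y : ℝ => (1 - y) * (s + y) ^ β) (a := 0) (b := 1)
      ?_ ?_
    · rw [key]; norm_num
    · intro y hy
      have hy' : 0 < s + y := hpos y (hsub2 hy)
      have da : HasDerivAt (fun y : ℝ => 1 - y) (-1) y := by
        simpa using ((hasDerivAt_id y).const_sub 1)
      have db := deriv_pow_shift s (β+1) y hy'.ne'
      have dc := deriv_pow_shift s (β+2) y hy'.ne'
      have D := ((da.mul db).div_const (β+1)).add (dc.div_const ((β+1)*(β+2)))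
      convert D using 1
      · rfl
      have eb : β + 1 - 1 = β := by ring
      have ec : β + 2 - 1 = β + 1 := by ring
      rw [eb, ec]
      field_simp
      ring
    · exact (ContinuousOn.mul (by fun_prop)
        (ContinuousOn.rpow_const (by fun_prop)
          (fun y hy => Or.inl (hpos y (hsub2 hy)).ne'))).intervalIntegrable
  rw [I1, I2]
  field_simp
  ring


/-- The i-th interior convolution weight `c_i(α,σ)` of the second-order approximation
of the Caputo derivative of order `α` with intermediate parameter `σ`. -/
noncomputable def ci (α σ : ℝ) (i : ℕ) : ℝ :=
  (((i : ℝ) + σ + 1) ^ (2 - α) - 2 * ((i : ℝ) + σ) ^ (2 - α)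
      + ((i : ℝ) + σ - 1) ^ (2 - α)) / (2 - α)
    - (((i : ℝ) + σ + 1) ^ (1 - α) - 2 * ((i : ℝ) + σ) ^ (1 - α)
      + ((i : ℝ) + σ - 1) ^ (1 - α)) / 2

/-- integral representation of the normalized interior weight
`a_i(α,σ;τ) = c_i(α,σ)·τ^{−α}/Γ(2−α)` via the Peano kernel (1−|y|). -/
theorem stmt_8 (α σ τ : ℝ) (i : ℕ)
    (hα : α ∈ Set.Ioo (0 : ℝ) 1) (hσ : σ ∈ Set.Ioc (1/2 : ℝ) 1)
    (hτ : 0 < τ) (hi : 1 ≤ i) :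
    ci α σ i * τ ^ (-α) / Real.Gamma (2 - α) =
      (1 - α) / Real.Gamma (2 - α) *
        ∫ y in (-1 : ℝ)..1,
          (1 - |y|) * ((((i : ℝ) + σ + y) * τ) ^ (-α)
            + α * τ / 2 * (((i : ℝ) + σ + y) * τ) ^ (-1 - α)) := by
  obtain ⟨hα0, hα1⟩ := hα
  obtain ⟨hσl, hσu⟩ := hσ
  have hi1 : (1:ℝ) ≤ (i:ℝ) := by exact_mod_cast hi
  set s : ℝ := (i:ℝ) + σ with hs_def
  have hs : 1 < s := by rw [hs_def]; linarith
  have hpos : ∀ y : ℝ, y ∈ Set.uIcc (-1:ℝ) 1 → 0 < s + y := by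
    intro y hy
    rw [Set.uIcc_of_le (by norm_num)] at hy
    nlinarith [hy.1]
  -- rewrite the integrand
  have hcongr : (∫ y in (-1:ℝ)..1,
        (1 - |y|) * (((s + y) * τ) ^ (-α) + α * τ / 2 * ((s + y) * τ) ^ (-1 - α)))
      = ∫ y in (-1:ℝ)..1,
        (τ ^ (-α)) * ((1 - |y|) * (s + y) ^ (-α))
          + (α * τ / 2 * τ ^ (-1 - α)) * ((1 - |y|) * (s + y) ^ (-1 - α)) := by
    apply intervalIntegral.integral_congr
    intro y hy
    have h1 : 0 < s + y := hpos y hy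
    simp only
    rw [Real.mul_rpow h1.le hτ.le, Real.mul_rpow h1.le hτ.le]
    ring
  rw [hcongr]
  have hcA : ContinuousOn (fun y : ℝ => (1 - |y|) * (s + y) ^ (-α)) (Set.uIcc (-1:ℝ) 1) :=
    ContinuousOn.mul (by fun_prop)
      (ContinuousOn.rpow_const (by fun_prop) (fun y hy => Or.inl (hpos y hy).ne'))
  have hcB : ContinuousOn (fun y : ℝ => (1 - |y|) * (s + y) ^ (-1 - α)) (Set.uIcc (-1:ℝ) 1) :=
    ContinuousOn.mul (by fun_prop)
      (ContinuousOn.rpow_const (by fun_prop) (fun y hy => Or.inl (hpos y hy).ne'))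
  rw [intervalIntegral.integral_add
      ((hcA.intervalIntegrable).const_mul _)
      ((hcB.intervalIntegrable).const_mul _),
    intervalIntegral.integral_const_mul, intervalIntegral.integral_const_mul]
  have hIA := integ s (-α) hs (by intro h; apply hα1.ne'; linarith) (by nlinarith)
  have hIB := integ s (-1 - α) hs (by intro h; apply hα0.ne'; linarith)
      (by intro h; apply hα1.ne'; linarith)
  rw [hIA, hIB]
  have eA2 : -α + 2 = 2 - α := by ring
  have eA1 : -α + 1 = 1 - α := by ring
  have eB2 : -1 - α + 2 = 1 - α := by ring
  have eB1 : -1 - α + 1 = -α := by ring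
  rw [eA2, eA1, eB2, eB1]
  have hτpow : τ ^ (-α) = τ * τ ^ (-1 - α) := by
    rw [show (-α) = 1 + (-1 - α) by ring, Real.rpow_add hτ, Real.rpow_one]
  have hΓ : Real.Gamma (2 - α) ≠ 0 := (Real.Gamma_pos_of_pos (by linarith)).ne'
  have h1α : (1:ℝ) - α ≠ 0 := by intro h; apply hα1.ne'; linarith
  have h2α : (2:ℝ) - α ≠ 0 := by intro h; apply hα1.ne'; nlinarith
  have hαne : α ≠ 0 := hα0.ne'
  rw [ci, ← hs_def, hτpow]
  field_simp
  ring
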